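/- arXiv:math/0510524 — 2 statements merged into one kernel-verified Lean document; each statement's English description precedes it below -/
import Mathlib

section
/- (Distribution formula, Theorem 6.) Let l ≥ 1 be an odd integer, h any integer, k ≥ 1 and m ≥ 0 integers, and x a real number. Then E_{m,q}^{(h,k)}(l·x) = ([l]_q^m / [l]_{−q}^k) · Σ_{i_1,…,i_k = 0}^{l−1} q^{h(i_1+⋯+i_k) − Σ_{j=2}^{k} (j−1) i_j} (−1)^{i_1+⋯+i_k} E_{m,q^l}^{(h,k)}(x + (i_1+⋯+i_k)/l). -/
open Finset

/-- The q-number `[x]_q = (1 - q^x)/(1 - q)`, with `q^x = exp (x * log q)` (rpow). -/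
noncomputable def qNum (q x : ℝ) : ℝ := (1 - q ^ x) / (1 - q)

/-- `[l]_{-q} = (1 - (-q)^l)/(1 + q)` for a natural number `l`. -/
noncomputable def qNumNeg (q : ℝ) (l : ℕ) : ℝ := (1 - (-q) ^ l) / (1 + q)

/-- The higher-order q-Euler polynomial
`E_{m,q}^{(h,k)}(x) = ((1+q)^k/(1-q)^m) * Σ_{j=0}^m C(m,j) (-1)^j q^{jx} / Π_{i=0}^{k-1} (1 + q^{h+j-i})`. -/
noncomputable def qE (q : ℝ) (h : ℤ) (k m : ℕ) (x : ℝ) : ℝ :=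
  ((1 + q) ^ k / (1 - q) ^ m) *
    ∑ j ∈ Finset.range (m + 1),
      (m.choose j : ℝ) * (-1) ^ j * q ^ ((j : ℝ) * x) /
        ∏ i ∈ Finset.range k, (1 + q ^ ((h : ℝ) + (j : ℝ) - (i : ℝ)))

private lemma rpow_sum' (q : ℝ) (hq : 0 < q) {ι : Type*} (s : Finset ι) (f : ι → ℝ) :
    q ^ (∑ r ∈ s, f r) = ∏ r ∈ s, q ^ f r := by
  classical
  induction s using Finset.induction with
  | empty => simp
  | insert _ _ hns ih => rw [Finset.sum_insert hns, Finset.prod_insert hns, Real.rpow_add hq, ih]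

private lemma geom' (q : ℝ) (hq : 0 < q) (l : ℕ) (hodd : Odd l) (c : ℝ) :
    ∑ t : Fin l, ((-1:ℝ)) ^ (t : ℕ) * q ^ (c * ((t : ℕ) : ℝ)) =
      (1 + (q ^ c) ^ l) / (1 + q ^ c) := by
  have hc : 0 < q ^ c := Real.rpow_pos_of_pos hq c
  have h1 : ∀ t : ℕ, (-1:ℝ) ^ t * q ^ (c * (t : ℝ)) = (-(q ^ c)) ^ t := by
    intro t
    rw [Real.rpow_mul hq.le, Real.rpow_natCast, ← mul_pow, neg_one_mul]
  simp only [h1]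
  rw [Fin.sum_univ_eq_sum_range, geom_sum_eq (by nlinarith : -(q ^ c) ≠ (1:ℝ)),
    hodd.neg_pow]
  rw [show -(q ^ c) ^ l - 1 = -((1 + (q ^ c) ^ l)) by ring,
      show -(q ^ c) - 1 = -((1 + q ^ c)) by ring, neg_div_neg_eq]

private lemma key' (q : ℝ) (hq : 0 < q) (l k : ℕ) (hodd : Odd l) (e : Fin k → ℝ) :
    ∑ i : Fin k → Fin l,
        ((-1:ℝ)) ^ (∑ r : Fin k, (i r : ℕ)) * q ^ (∑ r : Fin k, e r * ((i r : ℕ) : ℝ)) =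
      ∏ r : Fin k, (1 + (q ^ e r) ^ l) / (1 + q ^ e r) := by
  have step : ∀ i : Fin k → Fin l,
      ((-1:ℝ)) ^ (∑ r : Fin k, (i r : ℕ)) * q ^ (∑ r : Fin k, e r * ((i r : ℕ) : ℝ)) =
        ∏ r : Fin k, ((-1:ℝ)) ^ (i r : ℕ) * q ^ (e r * ((i r : ℕ) : ℝ)) := by
    intro i
    rw [Finset.prod_mul_distrib, ← rpow_sum' q hq, Finset.prod_pow_eq_pow_sum]
  simp only [step]
  rw [← Fintype.piFinset_univ, ← Finset.prod_univ_sum (fun _ => (univ : Finset (Fin l)))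
      (fun r t => ((-1:ℝ)) ^ (t : ℕ) * q ^ (e r * ((t : ℕ) : ℝ)))]
  exact Finset.prod_congr rfl fun r _ => geom' q hq l hodd (e r)

private lemma inner' (q : ℝ) (hq : 0 < q) (l : ℕ) (hl : 1 ≤ l) (hodd : Odd l) (h : ℤ) (k : ℕ)
    (j : ℕ) (x : ℝ) :
    ∑ i : Fin k → Fin l,
      q ^ ((∑ r : Fin k, (h : ℝ) * ((i r : ℕ) : ℝ)) - ∑ r : Fin k, (r : ℝ) * ((i r : ℕ) : ℝ)) *
        (-1 : ℝ) ^ (∑ r : Fin k, (i r : ℕ)) *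
        ((q ^ l : ℝ) ^ ((j : ℝ) * (x + (∑ r : Fin k, ((i r : ℕ) : ℝ)) / l)))
      = q ^ ((j : ℝ) * ((l : ℝ) * x)) *
        ∏ r : Fin k, (1 + (q ^ ((h : ℝ) + (j : ℝ) - (r : ℝ))) ^ l) /
          (1 + q ^ ((h : ℝ) + (j : ℝ) - (r : ℝ))) := by
  have hl0 : (l : ℝ) ≠ 0 := Nat.cast_ne_zero.mpr (by omega)
  have hbase : ∀ z : ℝ, ((q ^ l : ℝ)) ^ z = q ^ ((l : ℝ) * z) := by
    intro z; rw [← Real.rpow_natCast q l, ← Real.rpow_mul hq.le]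
  have step : ∀ i : Fin k → Fin l,
      q ^ ((∑ r : Fin k, (h : ℝ) * ((i r : ℕ) : ℝ)) - ∑ r : Fin k, (r : ℝ) * ((i r : ℕ) : ℝ)) *
        (-1 : ℝ) ^ (∑ r : Fin k, (i r : ℕ)) *
        ((q ^ l : ℝ) ^ ((j : ℝ) * (x + (∑ r : Fin k, ((i r : ℕ) : ℝ)) / l)))
      = q ^ ((j : ℝ) * ((l : ℝ) * x)) *
          ((-1 : ℝ) ^ (∑ r : Fin k, (i r : ℕ)) *
            q ^ (∑ r : Fin k, ((h : ℝ) + (j : ℝ) - (r : ℝ)) * ((i r : ℕ) : ℝ))) := by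
    intro i
    rw [hbase]
    have hsum : ∑ r : Fin k, ((h : ℝ) + (j : ℝ) - (r : ℝ)) * ((i r : ℕ) : ℝ)
        = ((∑ r : Fin k, (h : ℝ) * ((i r : ℕ) : ℝ)) + (j : ℝ) * (∑ r : Fin k, ((i r : ℕ) : ℝ)))
          - ∑ r : Fin k, (r : ℝ) * ((i r : ℕ) : ℝ) := by
      rw [Finset.mul_sum, ← Finset.sum_add_distrib, ← Finset.sum_sub_distrib]
      exact Finset.sum_congr rfl fun r _ => by ring
    have hexp : ((∑ r : Fin k, (h : ℝ) * ((i r : ℕ) : ℝ)) - ∑ r : Fin k, (r : ℝ) * ((i r : ℕ) : ℝ))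
        + (l : ℝ) * ((j : ℝ) * (x + (∑ r : Fin k, ((i r : ℕ) : ℝ)) / l))
        = (j : ℝ) * ((l : ℝ) * x) + ∑ r : Fin k, ((h : ℝ) + (j : ℝ) - (r : ℝ)) * ((i r : ℕ) : ℝ) := by
      rw [hsum]; field_simp; ring
    calc q ^ ((∑ r : Fin k, (h : ℝ) * ((i r : ℕ) : ℝ)) - ∑ r : Fin k, (r : ℝ) * ((i r : ℕ) : ℝ)) *
          (-1 : ℝ) ^ (∑ r : Fin k, (i r : ℕ)) *
          q ^ ((l : ℝ) * ((j : ℝ) * (x + (∑ r : Fin k, ((i r : ℕ) : ℝ)) / l)))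
        = (-1 : ℝ) ^ (∑ r : Fin k, (i r : ℕ)) *
            (q ^ ((∑ r : Fin k, (h : ℝ) * ((i r : ℕ) : ℝ)) - ∑ r : Fin k, (r : ℝ) * ((i r : ℕ) : ℝ))
              * q ^ ((l : ℝ) * ((j : ℝ) * (x + (∑ r : Fin k, ((i r : ℕ) : ℝ)) / l)))) := by ring
      _ = (-1 : ℝ) ^ (∑ r : Fin k, (i r : ℕ)) *
            q ^ ((j : ℝ) * ((l : ℝ) * x) + ∑ r : Fin k, ((h : ℝ) + (j : ℝ) - (r : ℝ)) * ((i r : ℕ) : ℝ)) := by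
          rw [← Real.rpow_add hq, hexp]
      _ = _ := by rw [Real.rpow_add hq]; ring
  simp only [step]
  rw [← Finset.mul_sum, key' q hq l k hodd (fun r => (h : ℝ) + (j : ℝ) - (r : ℝ))]

private lemma pull' {ι : Type*} (s : Finset ι) (C D c P : ℝ) (A B u : ι → ℝ) :
    ∑ i ∈ s, C * ((A i * B i) * (D * (c * u i / P)))
      = C * D * c / P * ∑ i ∈ s, A i * B i * u i := by
  rw [Finset.mul_sum]; exact Finset.sum_congr rfl fun i _ => by ring

theorem stmt_11 (q : ℝ) (hq : 0 < q) (hq1 : q ≠ 1) (l : ℕ) (hl : 1 ≤ l) (hodd : Odd l)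
    (h : ℤ) (k : ℕ) (hk : 1 ≤ k) (m : ℕ) (x : ℝ) :
    qE q h k m (l * x) =
      (qNum q l ^ m / qNumNeg q l ^ k) *
        ∑ i : Fin k → Fin l,
          q ^ ((h : ℝ) * (∑ j : Fin k, ((i j : ℕ) : ℝ)) -
                ∑ j : Fin k, (j : ℝ) * ((i j : ℕ) : ℝ)) *
            (-1 : ℝ) ^ (∑ j : Fin k, (i j : ℕ)) *
            qE (q ^ l) h k m (x + (∑ j : Fin k, ((i j : ℕ) : ℝ)) / l) := by
  classical
  have hql : (0:ℝ) < q ^ l := pow_pos hq l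
  have hql1 : q ^ l ≠ 1 := by
    rcases lt_or_gt_of_ne hq1 with hlt | hgt
    · exact ne_of_lt (pow_lt_one₀ hq.le hlt (by omega))
    · exact ne_of_gt (one_lt_pow₀ hgt (by omega))
  have h1q : (1:ℝ) - q ≠ 0 := sub_ne_zero.mpr (Ne.symm hq1)
  have h1ql : (1:ℝ) - q ^ l ≠ 0 := sub_ne_zero.mpr (Ne.symm hql1)
  have h1q' : (0:ℝ) < 1 + q := by linarith
  have h1ql' : (0:ℝ) < 1 + q ^ l := by linarith
  have hbase : ∀ z : ℝ, ((q ^ l : ℝ)) ^ z = (q ^ z) ^ l := by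
    intro z
    rw [← Real.rpow_natCast q l, ← Real.rpow_mul hq.le, mul_comm,
      Real.rpow_mul hq.le, Real.rpow_natCast]
  rw [qNum, qNumNeg, hodd.neg_pow, sub_neg_eq_add, Real.rpow_natCast]
  simp only [qE, Finset.mul_sum]
  rw [Finset.sum_comm]
  refine Finset.sum_congr rfl fun j hj => ?_
  rw [pull' univ (((1 - q ^ l) / (1 - q)) ^ m / ((1 + q ^ l) / (1 + q)) ^ k)
      ((1 + q ^ l) ^ k / (1 - q ^ l) ^ m) ((m.choose j : ℝ) * (-1) ^ j)
      (∏ i ∈ Finset.range k, (1 + (q ^ l : ℝ) ^ ((h : ℝ) + (j : ℝ) - (i : ℝ))))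
      (fun i : Fin k → Fin l =>
        q ^ ((∑ r : Fin k, (h : ℝ) * ((i r : ℕ) : ℝ)) - ∑ r : Fin k, (r : ℝ) * ((i r : ℕ) : ℝ)))
      (fun i : Fin k → Fin l => (-1 : ℝ) ^ (∑ r : Fin k, (i r : ℕ)))
      (fun i : Fin k → Fin l =>
        (q ^ l : ℝ) ^ ((j : ℝ) * (x + (∑ r : Fin k, ((i r : ℕ) : ℝ)) / l)))]
  rw [inner' q hq l hl hodd h k j x]
  rw [Fin.prod_univ_eq_prod_range (fun n : ℕ =>
      (1 + (q ^ ((h : ℝ) + (j : ℝ) - (n : ℝ))) ^ l) / (1 + q ^ ((h : ℝ) + (j : ℝ) - (n : ℝ)))) k]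
  simp only [hbase]
  rw [Finset.prod_div_distrib]
  have hPA : (0:ℝ) < ∏ i ∈ Finset.range k, (1 + q ^ ((h : ℝ) + (j : ℝ) - (i : ℝ))) :=
    Finset.prod_pos fun i _ => by positivity
  have hPB : (0:ℝ) < ∏ i ∈ Finset.range k, (1 + (q ^ ((h : ℝ) + (j : ℝ) - (i : ℝ))) ^ l) :=
    Finset.prod_pos fun i _ => by positivity
  field_simp
  have e1 : (1 + q) ^ k * ((1 + q ^ l) / (1 + q)) ^ k = (1 + q ^ l) ^ k := by
    rw [← mul_pow]; congr 1; field_simp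
  have e2 : (1 - q) ^ m * ((1 - q ^ l) / (1 - q)) ^ m = (1 - q ^ l) ^ m := by
    rw [← mul_pow]; congr 1; field_simp
  linear_combination ((m.choose j : ℝ) * (1 - q ^ l) ^ m) * e1 - ((m.choose j : ℝ) * (1 + q ^ l) ^ k) * e2
end

section
/- (Theorem 7.) For every integer k ≥ 2, every integer m ≥ 0 and every real number x, E_{m,q}^{(k,k)}(x) = Σ_{j=0}^{m} C(m,j) q^{jx} E_{m−j,q}^{(k+j,1)}(x) · E_{j,q}^{(k−1,k−1)}. -/
open Finset

lemma alt_real (N : ℕ) : ∑ i ∈ range (N+1), (-1:ℝ)^i * (N.choose i : ℝ) = if N = 0 then 1 else 0 := by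
  have h := Int.alternating_sum_range_choose (n := N)
  have h2 : ((∑ m ∈ range (N + 1), ((-1) ^ m * N.choose m : ℤ) : ℤ) : ℝ) = ((if N = 0 then 1 else 0 : ℤ) : ℝ) := by rw [h]
  push_cast at h2
  rw [← h2]

lemma binom_inv (f : ℕ → ℝ) (n : ℕ) :
    ∑ j ∈ range (n+1), (n.choose j : ℝ) * (-1:ℝ)^j *
      ∑ s ∈ range (j+1), (j.choose s : ℝ) * (-1:ℝ)^s * f s = f n := by
  have key := Finset.sum_range_diag_flip (n+1)
    (fun s t => ((n.choose (s+t) : ℝ) * (-1:ℝ)^(s+t)) * (((s+t).choose s : ℝ) * (-1:ℝ)^s * f s))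
  calc ∑ j ∈ range (n+1), (n.choose j : ℝ) * (-1:ℝ)^j *
        ∑ s ∈ range (j+1), (j.choose s : ℝ) * (-1:ℝ)^s * f s
      = ∑ j ∈ range (n+1), ∑ s ∈ range (j+1),
          ((n.choose (s+(j-s)) : ℝ) * (-1:ℝ)^(s+(j-s))) * (((s+(j-s)).choose s : ℝ) * (-1:ℝ)^s * f s) := by
        refine Finset.sum_congr rfl fun j hj => ?_
        rw [Finset.mul_sum]
        refine Finset.sum_congr rfl fun s hs => ?_
        rw [mem_range, Nat.lt_succ_iff] at hs
        rw [Nat.add_sub_cancel' hs]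
    _ = ∑ s ∈ range (n+1), ∑ t ∈ range (n+1-s),
          ((n.choose (s+t) : ℝ) * (-1:ℝ)^(s+t)) * (((s+t).choose s : ℝ) * (-1:ℝ)^s * f s) := key
    _ = f n := by
        rw [Finset.sum_eq_single n]
        · have hnn : n + 1 - n = 1 := by omega
          rw [hnn]
          simp only [sum_range_one, Nat.add_zero, Nat.choose_self, Nat.cast_one, one_mul, mul_one]
          rw [← mul_assoc, ← pow_add, Even.neg_one_pow ⟨n, rfl⟩, one_mul]
        · intro s hs hsn
          rw [mem_range, Nat.lt_succ_iff] at hs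
          have h1 : n + 1 - s = (n - s) + 1 := by omega
          rw [h1]
          have : ∀ t ∈ range ((n-s)+1),
              ((n.choose (s+t) : ℝ) * (-1:ℝ)^(s+t)) * (((s+t).choose s : ℝ) * (-1:ℝ)^s * f s)
              = ((n.choose s : ℝ) * f s) * ((-1:ℝ)^t * ((n-s).choose t : ℝ)) := by
            intro t ht
            rw [mem_range, Nat.lt_succ_iff] at ht
            have hstn : s + t ≤ n := by omega
            have hmul : (n.choose (s+t) * (s+t).choose s : ℕ) = n.choose s * (n-s).choose t := by
              rw [Nat.choose_mul (Nat.le_add_right s t)]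
              congr 1
              congr 1
              omega
            have hmulR : ((n.choose (s+t)) : ℝ) * ((s+t).choose s : ℝ) = (n.choose s : ℝ) * ((n-s).choose t : ℝ) := by exact_mod_cast hmul
            have hsign : (-1:ℝ)^(s+t) * (-1:ℝ)^s = (-1:ℝ)^t := by
              rw [← pow_add]
              have hh : s + t + s = 2*s + t := by omega
              rw [hh, pow_add, pow_mul]
              norm_num
            calc ((n.choose (s+t) : ℝ) * (-1:ℝ)^(s+t)) * (((s+t).choose s : ℝ) * (-1:ℝ)^s * f s)
                = (((n.choose (s+t)) : ℝ) * ((s+t).choose s : ℝ)) * ((-1:ℝ)^(s+t) * (-1:ℝ)^s) * f s := by ring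
              _ = ((n.choose s : ℝ) * ((n-s).choose t : ℝ)) * (-1:ℝ)^t * f s := by rw [hmulR, hsign]
              _ = ((n.choose s : ℝ) * f s) * ((-1:ℝ)^t * ((n-s).choose t : ℝ)) := by ring
          rw [Finset.sum_congr rfl this, ← Finset.mul_sum, alt_real (n-s)]
          have hns : ¬ (n - s = 0) := by omega
          rw [if_neg hns, mul_zero]
        · intro h
          simp at h

noncomputable def Pfun (q : ℝ) (k s : ℕ) : ℝ :=
  ∏ i ∈ range (k-1), (1 + q ^ ((k:ℝ) - 1 + (s:ℝ) - (i:ℝ)))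

noncomputable def Sfun (q : ℝ) (k j : ℕ) : ℝ :=
  ∑ s ∈ range (j+1), (j.choose s : ℝ) * (-1:ℝ)^s * (Pfun q k s)⁻¹

lemma Sinv (q : ℝ) (k n : ℕ) :
    ∑ j ∈ range (n+1), (n.choose j : ℝ) * (-1:ℝ)^j * Sfun q k j = (Pfun q k n)⁻¹ := by
  simpa [Sfun] using binom_inv (fun s => (Pfun q k s)⁻¹) n

theorem stmt_15 (q : ℝ) (hq : 0 < q) (hq1 : q ≠ 1) (k : ℕ) (hk : 2 ≤ k) (m : ℕ) (x : ℝ) :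
    qE q k k m x =
      ∑ j ∈ Finset.range (m + 1),
        (m.choose j : ℝ) * q ^ ((j : ℝ) * x) * qE q ((k : ℤ) + j) 1 (m - j) x *
          qE q ((k : ℤ) - 1) (k - 1) j 0 := by
  -- Step A : the (k-1, k-1) factor
  have hA : ∀ j : ℕ, qE q ((k:ℤ)-1) (k-1) j 0 = ((1+q)^(k-1)/(1-q)^j) * Sfun q k j := by
    intro j
    unfold qE Sfun
    congr 1
    refine sum_congr rfl fun s _ => ?_
    have h0 : ((s:ℝ) * (0:ℝ)) = 0 := by ring
    rw [h0, Real.rpow_zero, mul_one, div_eq_mul_inv]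
    congr 2
    unfold Pfun
    refine prod_congr rfl fun i _ => ?_
    congr 1
    push_cast
    ring
  -- Step B : the (k+j, 1) factor
  have hB : ∀ j : ℕ, qE q ((k:ℤ)+j) 1 (m-j) x
      = ((1+q)/(1-q)^(m-j)) * ∑ l ∈ range ((m-j)+1),
          ((m-j).choose l : ℝ) * (-1:ℝ)^l * q ^ ((l:ℝ)*x) * (1 + q ^ ((k:ℝ)+(j:ℝ)+(l:ℝ)))⁻¹ := by
    intro j
    unfold qE
    rw [pow_one]
    congr 1
    refine sum_congr rfl fun l _ => ?_
    rw [prod_range_one, div_eq_mul_inv]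
    congr 2
    congr 1
    push_cast
    ring
  -- Step C : the left-hand side
  have hk1 : k - 1 + 1 = k := by omega
  have hC : qE q (k:ℤ) k m x = ((1+q)^k/(1-q)^m) *
      ∑ n ∈ range (m+1), (m.choose n : ℝ) * (-1:ℝ)^n * q ^ ((n:ℝ)*x) *
        ((Pfun q k n)⁻¹ * (1 + q ^ ((k:ℝ)+(n:ℝ)))⁻¹) := by
    unfold qE
    congr 1
    refine sum_congr rfl fun n _ => ?_
    have hps := Finset.prod_range_succ' (fun i : ℕ => 1 + q ^ (((k:ℤ):ℝ) + (n:ℝ) - (i:ℝ))) (k-1)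
    rw [hk1] at hps
    rw [hps]
    unfold Pfun
    have hb1 : (∏ i ∈ range (k-1), (1 + q ^ (((k:ℤ):ℝ) + (n:ℝ) - ((i+1:ℕ):ℝ))))
        = ∏ i ∈ range (k-1), (1 + q ^ ((k:ℝ) - 1 + (n:ℝ) - (i:ℝ))) := by
      refine prod_congr rfl fun i _ => ?_
      congr 1
      congr 1
      push_cast
      ring
    have hb2 : (1 + q ^ (((k:ℤ):ℝ) + (n:ℝ) - ((0:ℕ):ℝ))) = 1 + q ^ ((k:ℝ)+(n:ℝ)) := by
      congr 1
      congr 1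
      push_cast
      ring
    rw [hb1, hb2, div_eq_mul_inv, mul_inv]
  rw [hC]
  -- rewrite each RHS summand
  have hterm : ∀ j ∈ range (m+1),
      (m.choose j : ℝ) * q ^ ((j:ℝ)*x) * qE q ((k:ℤ)+j) 1 (m-j) x * qE q ((k:ℤ)-1) (k-1) j 0
      = ((1+q)^k/(1-q)^m) * ∑ l ∈ range (m+1-j),
          (m.choose j : ℝ) * ((m-j).choose l : ℝ) * (-1:ℝ)^l * q ^ ((j:ℝ)*x) * q ^ ((l:ℝ)*x) *
            Sfun q k j * (1 + q ^ ((k:ℝ)+(j:ℝ)+(l:ℝ)))⁻¹ := by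
    intro j hj
    rw [mem_range, Nat.lt_succ_iff] at hj
    have e1 : (1+q) * (1+q)^(k-1) = (1+q)^k := by
      rw [← pow_succ', hk1]
    have e2 : (1-q)^(m-j) * (1-q)^j = (1-q)^m := by
      rw [← pow_add]
      congr 1
      omega
    have hc12 : (1+q)/(1-q)^(m-j) * ((1+q)^(k-1)/(1-q)^j) = (1+q)^k/(1-q)^m := by
      rw [div_mul_div_comm, e1, e2]
    have hrange : m + 1 - j = (m-j) + 1 := by omega
    rw [hA j, hB j, hrange, Finset.mul_sum, Finset.mul_sum, Finset.mul_sum, Finset.sum_mul]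
    refine sum_congr rfl fun l _ => ?_
    calc (m.choose j : ℝ) * q ^ ((j:ℝ)*x) *
          ((1+q)/(1-q)^(m-j) * (((m-j).choose l : ℝ) * (-1:ℝ)^l * q ^ ((l:ℝ)*x) *
            (1 + q ^ ((k:ℝ)+(j:ℝ)+(l:ℝ)))⁻¹)) * ((1+q)^(k-1)/(1-q)^j * Sfun q k j)
        = ((1+q)/(1-q)^(m-j) * ((1+q)^(k-1)/(1-q)^j)) *
            ((m.choose j : ℝ) * ((m-j).choose l : ℝ) * (-1:ℝ)^l * q ^ ((j:ℝ)*x) * q ^ ((l:ℝ)*x) *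
              Sfun q k j * (1 + q ^ ((k:ℝ)+(j:ℝ)+(l:ℝ)))⁻¹) := by ring
      _ = _ := by rw [hc12]
  rw [Finset.sum_congr rfl hterm, ← Finset.mul_sum]
  congr 1
  -- diagonal flip
  have hflip := Finset.sum_range_diag_flip (m+1)
    (fun j l => (m.choose j : ℝ) * ((m-j).choose l : ℝ) * (-1:ℝ)^l * q ^ ((j:ℝ)*x) * q ^ ((l:ℝ)*x) *
            Sfun q k j * (1 + q ^ ((k:ℝ)+(j:ℝ)+(l:ℝ)))⁻¹)
  rw [← hflip]
  refine sum_congr rfl fun n hn => ?_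
  rw [mem_range, Nat.lt_succ_iff] at hn
  have hterm2 : ∀ j ∈ range (n+1),
      (m.choose j : ℝ) * ((m-j).choose (n-j) : ℝ) * (-1:ℝ)^(n-j) * q ^ ((j:ℝ)*x) *
        q ^ (((n-j:ℕ):ℝ)*x) * Sfun q k j * (1 + q ^ ((k:ℝ)+(j:ℝ)+((n-j:ℕ):ℝ)))⁻¹
      = ((m.choose n : ℝ) * (-1:ℝ)^n * q ^ ((n:ℝ)*x) * (1 + q ^ ((k:ℝ)+(n:ℝ)))⁻¹) *
          ((n.choose j : ℝ) * (-1:ℝ)^j * Sfun q k j) := by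
    intro j hj
    rw [mem_range, Nat.lt_succ_iff] at hj
    have hcast : ((n-j:ℕ):ℝ) = (n:ℝ) - (j:ℝ) := by
      rw [Nat.cast_sub hj]
    have hch : (m.choose j : ℝ) * ((m-j).choose (n-j) : ℝ) = (m.choose n : ℝ) * (n.choose j : ℝ) := by
      have : m.choose n * n.choose j = m.choose j * (m-j).choose (n-j) := Nat.choose_mul hj
      exact_mod_cast this.symm
    have hsg : (-1:ℝ)^n * (-1:ℝ)^j = (-1:ℝ)^(n-j) := by
      rw [← pow_add]
      have hh : n + j = (n-j) + 2*j := by omega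
      rw [hh, pow_add, pow_mul]
      norm_num
    have hqq : q ^ ((j:ℝ)*x) * q ^ (((n-j:ℕ):ℝ)*x) = q ^ ((n:ℝ)*x) := by
      rw [← Real.rpow_add hq, hcast]
      congr 1
      ring
    have hexp : (k:ℝ)+(j:ℝ)+((n-j:ℕ):ℝ) = (k:ℝ)+(n:ℝ) := by
      rw [hcast]; ring
    rw [hexp]
    calc (m.choose j : ℝ) * ((m-j).choose (n-j) : ℝ) * (-1:ℝ)^(n-j) * q ^ ((j:ℝ)*x) *
          q ^ (((n-j:ℕ):ℝ)*x) * Sfun q k j * (1 + q ^ ((k:ℝ)+(n:ℝ)))⁻¹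
        = ((m.choose j : ℝ) * ((m-j).choose (n-j) : ℝ)) * (-1:ℝ)^(n-j) *
            (q ^ ((j:ℝ)*x) * q ^ (((n-j:ℕ):ℝ)*x)) * Sfun q k j * (1 + q ^ ((k:ℝ)+(n:ℝ)))⁻¹ := by ring
      _ = ((m.choose n : ℝ) * (n.choose j : ℝ)) * ((-1:ℝ)^n * (-1:ℝ)^j) *
            q ^ ((n:ℝ)*x) * Sfun q k j * (1 + q ^ ((k:ℝ)+(n:ℝ)))⁻¹ := by rw [hch, hsg, hqq]
      _ = _ := by ring
  rw [Finset.sum_congr rfl hterm2, ← Finset.mul_sum, Sinv q k n]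
  ring
end
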